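/- Let r > 0 and define F : ℝ² → ℝ by F(t₁,t₂) = (1/2)t₁²t₂ + exp(r·t₂). With κ = 1, the matrix η_{αβ} = ∂³F/∂t₁∂t_α∂t_β is the constant matrix with η₁₂ = η₂₁ = 1 and η₁₁ = η₂₂ = 0, and the function G(t₁,t₂) = −(r/24)t₂ satisfies Getzler's system for F on ℝ². Moreover ∂G/∂t₁ = 0 and E(G) = −1/12 for the Euler vector field E = t₁∂/∂t₁ + (2/r)∂/∂t₂. -/

import Mathlib

open Real

/-- Partial derivative of a function of `n` real variables in the `i`-th coordinate
direction. -/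
noncomputable def pd {n : ℕ} (i : Fin n) (f : (Fin n → ℝ) → ℝ) : (Fin n → ℝ) → ℝ :=
  fun t => fderiv ℝ f t (Pi.single i 1)

/-- The quantity `Σ_{α₁α₂α₃α₄} z_{α₁}z_{α₂}z_{α₃}z_{α₄} Δ_{α₁α₂α₃α₄}` of Getzler's system,
for a prepotential `F`, a candidate `G`-function `G`, and the (constant) inverse metric
`ηinv`, evaluated at the point `t` and covector `z`. -/
noncomputable def getzlerLHS {n : ℕ} (F G : (Fin n → ℝ) → ℝ)
    (ηinv : Matrix (Fin n) (Fin n) ℝ) (t z : Fin n → ℝ) : ℝ :=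
  let c3 : Fin n → Fin n → Fin n → ℝ :=
    fun μ α β => ∑ ν, ηinv μ ν * pd ν (pd α (pd β F)) t
  let c4 : Fin n → Fin n → Fin n → Fin n → ℝ :=
    fun μ α β γ => ∑ ν, ηinv μ ν * pd ν (pd α (pd β (pd γ F))) t
  let c5 : Fin n → Fin n → Fin n → Fin n → Fin n → ℝ :=
    fun μ α β γ δ => ∑ ν, ηinv μ ν * pd ν (pd α (pd β (pd γ (pd δ F)))) t
  ∑ a1, ∑ a2, ∑ a3, ∑ a4, z a1 * z a2 * z a3 * z a4 *
    (∑ μ, ∑ ν,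
      (3 * c3 μ a1 a2 * c3 ν a3 a4 * pd μ (pd ν G) t
        - 4 * c3 μ a1 a2 * c3 ν a3 μ * pd a4 (pd ν G) t
        - c3 μ a1 a2 * c4 ν a3 a4 μ * pd ν G t
        + 2 * c4 μ a1 a2 a3 * c3 ν a4 μ * pd ν G t
        + (1 / 6) * c4 μ a1 a2 a3 * c4 ν a4 μ ν
        + (1 / 24) * c5 μ a1 a2 a3 a4 * c3 ν μ ν
        - (1 / 4) * c4 μ a1 a2 ν * c4 ν a3 a4 μ))

lemma pd_of_hasFDerivAt {n : ℕ} {f : (Fin n → ℝ) → ℝ} {f' : (Fin n → ℝ) →L[ℝ] ℝ}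
    {t : Fin n → ℝ} (h : HasFDerivAt f f' t) (i : Fin n) :
    pd i f t = f' (Pi.single i 1) := by
  simp [pd, h.fderiv]

lemma hproj (j : Fin 2) (t : Fin 2 → ℝ) :
    HasFDerivAt (fun t : Fin 2 → ℝ => t j)
      (ContinuousLinearMap.proj (R := ℝ) (φ := fun _ : Fin 2 => ℝ) j) t :=
  (ContinuousLinearMap.proj (R := ℝ) (φ := fun _ : Fin 2 => ℝ) j).hasFDerivAt

lemma pd_const (i : Fin 2) (c : ℝ) : pd i (fun _ : Fin 2 → ℝ => c) = fun _ => 0 := by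
  funext t
  rw [pd_of_hasFDerivAt (hasFDerivAt_const c t) i]
  simp

lemma pd0_t0 : pd 0 (fun t : Fin 2 → ℝ => t 0) = fun _ => (1:ℝ) := by
  funext t; rw [pd_of_hasFDerivAt (hproj 0 t) 0]; simp
lemma pd1_t0 : pd 1 (fun t : Fin 2 → ℝ => t 0) = fun _ => (0:ℝ) := by
  funext t; rw [pd_of_hasFDerivAt (hproj 0 t) 1]; norm_num [Pi.single_apply]
lemma pd0_t1 : pd 0 (fun t : Fin 2 → ℝ => t 1) = fun _ => (0:ℝ) := by
  funext t; rw [pd_of_hasFDerivAt (hproj 1 t) 0]; norm_num [Pi.single_apply]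
lemma pd1_t1 : pd 1 (fun t : Fin 2 → ℝ => t 1) = fun _ => (1:ℝ) := by
  funext t; rw [pd_of_hasFDerivAt (hproj 1 t) 1]; simp

lemma pd0_exp (c r : ℝ) :
    pd 0 (fun t : Fin 2 → ℝ => c * Real.exp (r * t 1)) = fun _ => 0 := by
  funext t
  rw [pd_of_hasFDerivAt (((hproj 1 t).const_mul r).exp.const_mul c) 0]
  norm_num [Pi.single_apply]

lemma pd1_exp (c r : ℝ) :
    pd 1 (fun t : Fin 2 → ℝ => c * Real.exp (r * t 1)) =
      fun t => c * r * Real.exp (r * t 1) := by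
  funext t
  rw [pd_of_hasFDerivAt (((hproj 1 t).const_mul r).exp.const_mul c) 1]
  simp [Pi.single_apply]
  ring

-- F and its first derivatives
lemma pd0_F (r : ℝ) :
    pd 0 (fun t : Fin 2 → ℝ => (1/2) * (t 0)^2 * t 1 + Real.exp (r * t 1)) =
      fun t => t 0 * t 1 := by
  funext t
  have h := ((((hproj 0 t).mul (hproj 0 t)).const_mul ((1:ℝ)/2)).mul (hproj 1 t)).add
      (((hproj 1 t).const_mul r).exp)
  rw [show (fun t : Fin 2 → ℝ => (1/2) * (t 0)^2 * t 1 + Real.exp (r * t 1)) =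
      (fun t : Fin 2 → ℝ => (1/2) * (t 0 * t 0) * t 1 + Real.exp (r * t 1)) from by
    funext t; rw [pow_two]]
  rw [pd_of_hasFDerivAt (f := fun t : Fin 2 → ℝ => (1/2) * (t 0 * t 0) * t 1 + Real.exp (r * t 1)) h 0]
  simp [Pi.single_apply]
  ring

lemma pd1_F (r : ℝ) :
    pd 1 (fun t : Fin 2 → ℝ => (1/2) * (t 0)^2 * t 1 + Real.exp (r * t 1)) =
      fun t => (1/2) * (t 0 * t 0) + r * Real.exp (r * t 1) := by
  funext t
  have h := ((((hproj 0 t).mul (hproj 0 t)).const_mul ((1:ℝ)/2)).mul (hproj 1 t)).add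
      (((hproj 1 t).const_mul r).exp)
  rw [show (fun t : Fin 2 → ℝ => (1/2) * (t 0)^2 * t 1 + Real.exp (r * t 1)) =
      (fun t : Fin 2 → ℝ => (1/2) * (t 0 * t 0) * t 1 + Real.exp (r * t 1)) from by
    funext t; rw [pow_two]]
  rw [pd_of_hasFDerivAt (f := fun t : Fin 2 → ℝ => (1/2) * (t 0 * t 0) * t 1 + Real.exp (r * t 1)) h 1]
  simp [Pi.single_apply]
  ring

-- A = t0 * t1
lemma pd0_A : pd 0 (fun t : Fin 2 → ℝ => t 0 * t 1) = fun t => t 1 := by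
  funext t
  rw [pd_of_hasFDerivAt (f := fun t : Fin 2 → ℝ => t 0 * t 1) ((hproj 0 t).mul (hproj 1 t)) 0]
  norm_num [Pi.single_apply]

lemma pd1_A : pd 1 (fun t : Fin 2 → ℝ => t 0 * t 1) = fun t => t 0 := by
  funext t
  rw [pd_of_hasFDerivAt (f := fun t : Fin 2 → ℝ => t 0 * t 1) ((hproj 0 t).mul (hproj 1 t)) 1]
  norm_num [Pi.single_apply]

-- B = 1/2 t0² + r e^{r t1}  (written with t0*t0)
lemma pd0_B (r : ℝ) :
    pd 0 (fun t : Fin 2 → ℝ => (1/2) * (t 0 * t 0) + r * Real.exp (r * t 1)) =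
      fun t => t 0 := by
  funext t
  rw [pd_of_hasFDerivAt (f := fun t : Fin 2 → ℝ => (1/2) * (t 0 * t 0) + r * Real.exp (r * t 1)) ((((hproj 0 t).mul (hproj 0 t)).const_mul (1/2)).add
      (((hproj 1 t).const_mul r).exp.const_mul r)) 0]
  norm_num [Pi.single_apply]
  ring

lemma pd1_B (r : ℝ) :
    pd 1 (fun t : Fin 2 → ℝ => (1/2) * (t 0 * t 0) + r * Real.exp (r * t 1)) =
      fun t => r * r * Real.exp (r * t 1) := by
  funext t
  rw [pd_of_hasFDerivAt (f := fun t : Fin 2 → ℝ => (1/2) * (t 0 * t 0) + r * Real.exp (r * t 1)) ((((hproj 0 t).mul (hproj 0 t)).const_mul (1/2)).add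
      (((hproj 1 t).const_mul r).exp.const_mul r)) 1]
  norm_num [Pi.single_apply]
  ring

-- G = c * t1
lemma pd0_lin1 (c : ℝ) :
    pd 0 (fun t : Fin 2 → ℝ => c * t 1) = fun _ => 0 := by
  funext t
  rw [pd_of_hasFDerivAt ((hproj 1 t).const_mul c) 0]
  norm_num [Pi.single_apply]

lemma pd1_lin1 (c : ℝ) :
    pd 1 (fun t : Fin 2 → ℝ => c * t 1) = fun _ => c := by
  funext t
  rw [pd_of_hasFDerivAt ((hproj 1 t).const_mul c) 1]
  simp [Pi.single_apply]

set_option maxHeartbeats 4000000 in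
/-- The `G`-function `G = −(r/24)t₂` of the Frobenius manifold with prepotential
`F = ½t₁²t₂ + e^{rt₂}` (for `r = 1`, the quantum cohomology of `ℂP¹`): the matrix
`η_{αβ} = ∂³F/∂t₁∂t_α∂t_β` is the constant matrix `!![0,1;1,0]`, `G` satisfies
Getzler's system for `F` on `ℝ²`, `∂G/∂t₁ = 0`, and `E(G) = −1/12` for the Euler
vector field `E = t₁∂₁ + (2/r)∂₂`. -/
theorem G_function_QCP1 (r : ℝ) (hr : 0 < r)
    (F G : (Fin 2 → ℝ) → ℝ)
    (hF : F = fun t => (1/2) * (t 0)^2 * t 1 + Real.exp (r * t 1))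
    (hG : G = fun t => -(r/24) * t 1) :
    (∀ t : Fin 2 → ℝ, ∀ α β : Fin 2,
      pd 0 (pd α (pd β F)) t = (!![0, 1; 1, 0] : Matrix (Fin 2) (Fin 2) ℝ) α β) ∧
    (∀ t z : Fin 2 → ℝ, getzlerLHS F G !![0, 1; 1, 0] t z = 0) ∧
    (∀ t : Fin 2 → ℝ, pd 0 G t = 0) ∧
    (∀ t : Fin 2 → ℝ, t 0 * pd 0 G t + (2/r) * pd 1 G t = -(1/12)) := by
  subst hF hG
  refine ⟨?_, ?_, ?_, ?_⟩
  · intro t α β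
    fin_cases α <;> fin_cases β <;>
      (simp only [Fin.zero_eta, Fin.mk_one, pd0_F, pd1_F, pd0_A, pd1_A, pd0_B, pd1_B,
        pd0_t0, pd1_t0, pd0_t1, pd1_t1, pd0_exp, pd1_exp, pd_const]) <;> norm_num
  · intro t z
    simp only [getzlerLHS, Fin.sum_univ_two,
      pd0_F, pd1_F, pd0_A, pd1_A, pd0_B, pd1_B, pd0_t0, pd1_t0, pd0_t1, pd1_t1,
      pd0_exp, pd1_exp, pd_const, pd0_lin1, pd1_lin1,
      Matrix.cons_val_zero, Matrix.cons_val_one, Matrix.head_cons, Matrix.head_fin_const,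
      Matrix.cons_val', Matrix.empty_val', Matrix.cons_val_fin_one]
    norm_num [Matrix.cons_val_zero, Matrix.cons_val_one, Matrix.head_cons]
    right
    ring
  · intro t
    rw [pd0_lin1]
  · intro t
    rw [pd0_lin1, pd1_lin1]
    field_simp
    ring
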